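/- Let 𝒳 ⊆ ℝ^p be nonempty compact, f : ℝ^p → ℝ^n be L-Lipschitz on 𝒳 with L > 0, and 𝒴 = f(𝒳); assume the frontier ∂𝒴 is contained in f(∂𝒳). Let ε > 0, and suppose the frontier ∂𝒳 can be covered by N closed balls of radius ε/(2L) centered at points of ∂𝒳. Let x_1, …, x_M be i.i.d. random variables with common law P_𝒳 satisfying P_𝒳(𝒳) = 1 and P_𝒳(closedBall(x, ε/(2L))) ≥ Λ for all x ∈ ∂𝒳, for some Λ > 0. Set y_i = f(x_i) and Ŷ^M = convexHull({y_1, …, y_M}). Then, with probability at least 1 − N·(1 − Λ)^M, the Hausdorff distance satisfies d_H(Ŷ^M, convexHull(𝒴)) ≤ ε. -/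

import Mathlib

open MeasureTheory ProbabilityTheory Metric Filter Pointwise

private lemma exists_frontier_ray {E : Type*} [NormedAddCommGroup E] [NormedSpace ℝ E]
    {s : Set E} (hs : IsCompact s) {y : E} (hy : y ∈ s) (e : E) (he : ‖e‖ = 1) :
    ∃ t : ℝ, 0 ≤ t ∧ y + t • e ∈ frontier s := by
  set g : ℝ → E := fun t => y + t • e with hg
  have hgc : Continuous g := by fun_prop
  set T : Set ℝ := {t | 0 ≤ t ∧ g t ∈ s} with hT
  have hT0 : (0:ℝ) ∈ T := ⟨le_refl 0, by simpa [g] using hy⟩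
  have hTc : IsClosed T := by
    have hTeq : T = Set.Ici (0:ℝ) ∩ g ⁻¹' s := by
      ext t; simp [hT, Set.mem_Ici, And.comm]
    rw [hTeq]
    exact isClosed_Ici.inter (hs.isClosed.preimage hgc)
  obtain ⟨R, hR⟩ := hs.isBounded.subset_closedBall 0
  have hTb : Bornology.IsBounded T := by
    apply (Metric.isBounded_closedBall (x := (0:ℝ)) (r := R + ‖y‖)).subset
    rintro t ⟨_, hts⟩
    have h1 : ‖g t‖ ≤ R := by simpa [dist_eq_norm] using hR hts
    have h2 : t • e = g t - y := by simp [g]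
    have h3 : |t| = ‖t • e‖ := by rw [norm_smul, he, Real.norm_eq_abs, mul_one]
    have h4 : ‖g t - y‖ ≤ R + ‖y‖ := (norm_sub_le _ _).trans (by linarith)
    simp only [Metric.mem_closedBall, Real.dist_eq, sub_zero]
    rw [h3, h2]; exact h4
  have hTcomp : IsCompact T := isCompact_of_isClosed_isBounded hTc hTb
  set t0 := sSup T with ht0
  have ht0T : t0 ∈ T := hTcomp.sSup_mem ⟨0, hT0⟩
  refine ⟨t0, ht0T.1, ?_⟩
  rw [frontier_eq_closure_inter_closure, hs.isClosed.closure_eq]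
  refine ⟨ht0T.2, ?_⟩
  have htend : Tendsto (fun k : ℕ => g (t0 + 1 / (k + 1))) atTop (nhds (g t0)) := by
    have h1 : Tendsto (fun k : ℕ => t0 + 1 / (k + 1)) atTop (nhds t0) := by
      simpa using tendsto_const_nhds.add (tendsto_one_div_add_atTop_nhds_zero_nat (𝕜 := ℝ))
    exact (hgc.tendsto t0).comp h1
  refine mem_closure_of_tendsto htend (Eventually.of_forall fun k => ?_)
  intro hmem
  have hk : t0 + 1 / (k + 1) ∈ T := ⟨add_nonneg ht0T.1 (by positivity), hmem⟩
  have : t0 + 1 / ((k : ℝ) + 1) ≤ t0 := le_csSup hTb.bddAbove hk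
  have hpos : (0:ℝ) < 1 / ((k : ℝ) + 1) := by positivity
  linarith

private lemma subset_convexHull_frontier {E : Type*} [NormedAddCommGroup E] [NormedSpace ℝ E]
    [Nontrivial E] {s : Set E} (hs : IsCompact s) : s ⊆ convexHull ℝ (frontier s) := by
  intro y hy
  obtain ⟨e, he⟩ := exists_norm_eq E (zero_le_one)
  obtain ⟨t₁, ht₁0, ht₁⟩ := exists_frontier_ray hs hy e he
  obtain ⟨t₂, ht₂0, ht₂⟩ := exists_frontier_ray hs hy (-e) (by simpa using he)
  rcases eq_or_lt_of_le (add_nonneg ht₁0 ht₂0) with h | h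
  · have h1 : t₁ = 0 := by linarith
    exact subset_convexHull ℝ (frontier s) (by simpa [h1] using ht₁)
  · have h0 : t₁ + t₂ ≠ 0 := ne_of_gt h
    have key : y = (t₂/(t₁+t₂)) • (y + t₁ • e) + (t₁/(t₁+t₂)) • (y + t₂ • (-e)) := by
      match_scalars <;> field_simp <;> ring
    rw [key]
    exact (convex_convexHull ℝ (frontier s)) (subset_convexHull ℝ _ ht₁)
      (subset_convexHull ℝ _ ht₂) (div_nonneg ht₂0 h.le) (div_nonneg ht₁0 h.le)
      (by field_simp; ring)

private lemma det_bound {p n M N : ℕ}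
    (𝒳 : Set (EuclideanSpace ℝ (Fin p))) (h𝒳c : IsCompact 𝒳)
    (f : EuclideanSpace ℝ (Fin p) → EuclideanSpace ℝ (Fin n))
    (L : ℝ) (hL : 0 < L)
    (hf : ∀ x₁ ∈ 𝒳, ∀ x₂ ∈ 𝒳, ‖f x₁ - f x₂‖ ≤ L * ‖x₁ - x₂‖)
    (hbd : frontier (f '' 𝒳) ⊆ f '' frontier 𝒳)
    (ε : ℝ) (hε : 0 < ε)
    (a : Fin N → EuclideanSpace ℝ (Fin p))
    (hcov : frontier 𝒳 ⊆ ⋃ i, Metric.closedBall (a i) (ε / (2 * L)))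
    (z : Fin M → EuclideanSpace ℝ (Fin p)) (hz : ∀ j, z j ∈ 𝒳)
    (hzc : ∀ i, ∃ j, z j ∈ Metric.closedBall (a i) (ε / (2 * L)))
    (hM : 0 < M) :
    Metric.hausdorffDist (convexHull ℝ (Set.range fun j => f (z j)))
      (convexHull ℝ (f '' 𝒳)) ≤ ε := by
  set S := convexHull ℝ (Set.range fun j => f (z j)) with hSdef
  set T := convexHull ℝ (f '' 𝒳) with hTdef
  have hST : S ⊆ T := by
    apply convexHull_mono
    rintro _ ⟨j, rfl⟩
    exact ⟨z j, hz j, rfl⟩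
  have hSne : S.Nonempty :=
    ⟨f (z ⟨0, hM⟩), subset_convexHull ℝ _ ⟨⟨0, hM⟩, rfl⟩⟩
  rcases Nat.eq_zero_or_pos n with hn | hn
  · -- subsingleton case
    subst hn
    haveI : Subsingleton (EuclideanSpace ℝ (Fin 0)) :=
      inferInstanceAs (Subsingleton (PiLp 2 fun _ : Fin 0 => ℝ))
    have hTS : T ⊆ S := by
      intro t ht
      obtain ⟨s0, hs0⟩ := hSne
      rwa [Subsingleton.elim t s0]
    rw [Set.Subset.antisymm hST hTS, Metric.hausdorffDist_self_zero]
    exact hε.le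
  · haveI : Nonempty (Fin n) := ⟨⟨0, hn⟩⟩
    haveI : Nontrivial (EuclideanSpace ℝ (Fin n)) :=
      inferInstanceAs (Nontrivial (PiLp 2 fun _ : Fin n => ℝ))
    have hlips : LipschitzOnWith L.toNNReal f 𝒳 := by
      apply LipschitzOnWith.of_dist_le_mul
      intro x₁ hx₁ x₂ hx₂
      rw [dist_eq_norm, dist_eq_norm, Real.coe_toNNReal L hL.le]
      exact hf x₁ hx₁ x₂ hx₂
    have hYc : IsCompact (f '' 𝒳) := h𝒳c.image_of_continuousOn hlips.continuousOn
    have hSc : IsCompact S := (Set.finite_range _).isCompact_convexHull ℝ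
    have hfr : f '' frontier 𝒳 ⊆ Metric.cthickening ε S := by
      rintro _ ⟨x', hx', rfl⟩
      obtain ⟨i, hi⟩ := Set.mem_iUnion.mp (hcov hx')
      obtain ⟨j, hj⟩ := hzc i
      have hx'𝒳 : x' ∈ 𝒳 := by
        rw [← h𝒳c.isClosed.closure_eq]; exact frontier_subset_closure hx'
      have hdx : dist x' (z j) ≤ ε / L := by
        have h1 : dist x' (a i) ≤ ε / (2 * L) := Metric.mem_closedBall.mp hi
        have h2 : dist (a i) (z j) ≤ ε / (2 * L) := by
          rw [dist_comm]; exact Metric.mem_closedBall.mp hj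
        have h3 : ε / (2 * L) + ε / (2 * L) = ε / L := by field_simp; ring
        calc dist x' (z j) ≤ dist x' (a i) + dist (a i) (z j) := dist_triangle _ _ _
          _ ≤ ε / (2 * L) + ε / (2 * L) := add_le_add h1 h2
          _ = ε / L := h3
      have hd : dist (f x') (f (z j)) ≤ ε := by
        calc dist (f x') (f (z j)) = ‖f x' - f (z j)‖ := dist_eq_norm _ _
          _ ≤ L * ‖x' - z j‖ := hf x' hx'𝒳 (z j) (hz j)
          _ = L * dist x' (z j) := by rw [dist_eq_norm]
          _ ≤ L * (ε / L) := mul_le_mul_of_nonneg_left hdx hL.le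
          _ = ε := by field_simp
      exact Metric.mem_cthickening_of_dist_le (f x') (f (z j)) ε S
        (subset_convexHull ℝ _ ⟨j, rfl⟩) hd
    have hconv : Convex ℝ (Metric.cthickening ε S) := (convex_convexHull ℝ _).cthickening ε
    have hTh : T ⊆ Metric.cthickening ε S := by
      apply convexHull_min ?_ hconv
      intro y hy
      have h1 : y ∈ convexHull ℝ (frontier (f '' 𝒳)) := subset_convexHull_frontier hYc hy
      exact convexHull_min (hbd.trans hfr) hconv h1
    apply Metric.hausdorffDist_le_of_mem_dist hε.le
    · intro u hu
      exact ⟨u, hST hu, by simpa using hε.le⟩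
    · intro v hv
      have hvth := hTh hv
      rw [Metric.mem_cthickening_iff] at hvth
      have hinf : Metric.infDist v S ≤ ε := by
        have h1 := ENNReal.toReal_mono ENNReal.ofReal_ne_top hvth
        rwa [ENNReal.toReal_ofReal hε.le] at h1
      obtain ⟨u, huS, hud⟩ := hSc.exists_infDist_eq_dist hSne v
      exact ⟨u, huS, hud ▸ hinf⟩

/-- **Finite-sample Hausdorff bound** (Theorem 2, first conclusion).
With probability at least `1 - N·(1 - Λ)^M`, the Hausdorff distance between the convex
hull of the output samples and the convex hull of the true reachable set is at most `ε`. -/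
theorem randup_finite_sample_hausdorff {p n M N : ℕ}
    (𝒳 : Set (EuclideanSpace ℝ (Fin p))) (h𝒳ne : 𝒳.Nonempty) (h𝒳c : IsCompact 𝒳)
    (f : EuclideanSpace ℝ (Fin p) → EuclideanSpace ℝ (Fin n))
    (L : ℝ) (hL : 0 < L)
    (hf : ∀ x₁ ∈ 𝒳, ∀ x₂ ∈ 𝒳, ‖f x₁ - f x₂‖ ≤ L * ‖x₁ - x₂‖)
    (hbd : frontier (f '' 𝒳) ⊆ f '' frontier 𝒳)
    (ε : ℝ) (hε : 0 < ε)
    (a : Fin N → EuclideanSpace ℝ (Fin p)) (ha : ∀ i, a i ∈ frontier 𝒳)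
    (hcov : frontier 𝒳 ⊆ ⋃ i, Metric.closedBall (a i) (ε / (2 * L)))
    {Ω : Type*} [MeasureSpace Ω] [IsProbabilityMeasure (ℙ : Measure Ω)]
    (x : Fin M → Ω → EuclideanSpace ℝ (Fin p)) (hxmeas : ∀ i, Measurable (x i))
    (P𝒳 : Measure (EuclideanSpace ℝ (Fin p))) [IsProbabilityMeasure P𝒳]
    (hlaw : ∀ i, Measure.map (x i) ℙ = P𝒳)
    (hindep : iIndepFun x ℙ)
    (hsupp : P𝒳 𝒳 = 1)
    (Λ : ℝ) (hΛ : 0 < Λ)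
    (hball : ∀ x' ∈ frontier 𝒳, ENNReal.ofReal Λ ≤ P𝒳 (Metric.closedBall x' (ε / (2 * L)))) :
    ENNReal.ofReal (1 - N * (1 - Λ) ^ M) ≤
      ℙ {ω | Metric.hausdorffDist
          (convexHull ℝ (Set.range fun i => f (x i ω)))
          (convexHull ℝ (f '' 𝒳)) ≤ ε} := by
  classical
  rcases Nat.eq_zero_or_pos M with hM | hM
  · subst hM
    have huniv : {ω : Ω | Metric.hausdorffDist
        (convexHull ℝ (Set.range fun i : Fin 0 => f (x i ω)))
        (convexHull ℝ (f '' 𝒳)) ≤ ε} = Set.univ := by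
      ext ω
      simp [Set.range_eq_empty, Metric.hausdorffDist_empty', hε.le]
    rw [huniv, measure_univ]
    refine ENNReal.ofReal_le_one.mpr ?_
    have h1 : (0:ℝ) ≤ (N : ℝ) * (1 - Λ) ^ 0 := by simp
    linarith
  · set r := ε / (2 * L) with hr
    have h𝒳m : MeasurableSet 𝒳 := h𝒳c.isClosed.measurableSet
    -- samples almost surely in 𝒳
    have hS1 : ℙ (⋂ j, x j ⁻¹' 𝒳)ᶜ = 0 := by
      rw [Set.compl_iInter]
      refine le_antisymm (le_trans (measure_iUnion_le _) ?_) (zero_le)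
      have hj0 : ∀ j : Fin M, ℙ ((x j ⁻¹' 𝒳)ᶜ) = 0 := by
        intro j
        rw [← Set.preimage_compl, ← Measure.map_apply (hxmeas j) h𝒳m.compl, hlaw j,
          prob_compl_eq_one_sub h𝒳m, hsupp, tsub_self]
      simp [hj0]
    -- bad events
    set A : Fin N → Set Ω := fun i => ⋂ j, x j ⁻¹' (Metric.closedBall (a i) r)ᶜ with hA
    have hAm : ∀ i, MeasurableSet (A i) :=
      fun i => MeasurableSet.iInter fun j => (hxmeas j) measurableSet_closedBall.compl
    -- bound on union of bad events
    have hU : ℙ (⋃ i, A i) ≤ ENNReal.ofReal (N * (1 - Λ) ^ M) := by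
      rcases Nat.eq_zero_or_pos N with hN | hN
      · subst hN
        simp
      · have hΛ1 : Λ ≤ 1 := by
          have h1 := (hball (a ⟨0, hN⟩) (ha ⟨0, hN⟩)).trans (prob_le_one)
          exact ENNReal.ofReal_le_one.mp h1
        have hAi : ∀ i, ℙ (A i) ≤ ENNReal.ofReal ((1 - Λ) ^ M) := by
          intro i
          have hBm : MeasurableSet ((Metric.closedBall (a i) r)ᶜ) :=
            measurableSet_closedBall.compl
          have hprod := (iIndepFun_iff_measure_inter_preimage_eq_mul.mp hindep)
            Finset.univ (sets := fun _ => (Metric.closedBall (a i) r)ᶜ) (fun j _ => hBm)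
          have hAeq : A i = ⋂ j ∈ Finset.univ, x j ⁻¹' (Metric.closedBall (a i) r)ᶜ := by
            simp [hA]
          rw [hAeq, hprod]
          have hfac : ∀ j : Fin M,
              ℙ (x j ⁻¹' (Metric.closedBall (a i) r)ᶜ) ≤ ENNReal.ofReal (1 - Λ) := by
            intro j
            rw [← Measure.map_apply (hxmeas j) hBm, hlaw j,
              prob_compl_eq_one_sub measurableSet_closedBall,
              ENNReal.ofReal_sub 1 hΛ.le, ENNReal.ofReal_one]
            exact tsub_le_tsub_left (hball (a i) (ha i)) 1
          calc ∏ j : Fin M, ℙ (x j ⁻¹' (Metric.closedBall (a i) r)ᶜ)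
              ≤ ∏ _j : Fin M, ENNReal.ofReal (1 - Λ) :=
                Finset.prod_le_prod' fun j _ => hfac j
            _ = (ENNReal.ofReal (1 - Λ)) ^ M := by
                rw [Finset.prod_const, Finset.card_univ, Fintype.card_fin]
            _ = ENNReal.ofReal ((1 - Λ) ^ M) := (ENNReal.ofReal_pow (by linarith) M).symm
        calc ℙ (⋃ i, A i) ≤ ∑' i, ℙ (A i) := measure_iUnion_le _
          _ = ∑ i : Fin N, ℙ (A i) := tsum_fintype _
          _ ≤ ∑ _i : Fin N, ENNReal.ofReal ((1 - Λ) ^ M) :=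
              Finset.sum_le_sum fun i _ => hAi i
          _ = N * ENNReal.ofReal ((1 - Λ) ^ M) := by
              rw [Finset.sum_const, Finset.card_univ, Fintype.card_fin, nsmul_eq_mul]
          _ = ENNReal.ofReal (N * (1 - Λ) ^ M) := by
              rw [ENNReal.ofReal_mul (Nat.cast_nonneg N), ENNReal.ofReal_natCast]
    -- good event inclusion
    have hincl : ((⋃ i, A i)ᶜ ∩ ⋂ j, x j ⁻¹' 𝒳) ⊆ {ω | Metric.hausdorffDist
        (convexHull ℝ (Set.range fun i => f (x i ω)))
        (convexHull ℝ (f '' 𝒳)) ≤ ε} := by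
      rintro ω ⟨hω2, hω1⟩
      simp only [Set.mem_iInter, Set.mem_preimage] at hω1
      simp only [Set.mem_compl_iff, Set.mem_iUnion, not_exists, hA, Set.mem_iInter,
        Set.mem_preimage, Set.mem_compl_iff, not_forall, not_not] at hω2
      exact det_bound 𝒳 h𝒳c f L hL hf hbd ε hε a hcov (fun j => x j ω) hω1 hω2 hM
    have hc : 0 ≤ (N : ℝ) * (1 - Λ) ^ M := by
      rcases Nat.eq_zero_or_pos N with hN | hN
      · subst hN; simp
      · have hΛ1 : Λ ≤ 1 := by
          have h1 := (hball (a ⟨0, hN⟩) (ha ⟨0, hN⟩)).trans (prob_le_one)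
          exact ENNReal.ofReal_le_one.mp h1
        exact mul_nonneg (Nat.cast_nonneg N) (pow_nonneg (by linarith) M)
    calc ENNReal.ofReal (1 - N * (1 - Λ) ^ M)
        = 1 - ENNReal.ofReal (N * (1 - Λ) ^ M) := by
          rw [ENNReal.ofReal_sub 1 hc, ENNReal.ofReal_one]
      _ ≤ 1 - ℙ (⋃ i, A i) := tsub_le_tsub_left hU 1
      _ = ℙ ((⋃ i, A i)ᶜ) := (prob_compl_eq_one_sub (MeasurableSet.iUnion hAm)).symm
      _ = ℙ ((⋃ i, A i)ᶜ ∩ ⋂ j, x j ⁻¹' 𝒳) := (measure_inter_conull hS1).symm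
      _ ≤ _ := measure_mono hincl
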